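/- Let K be a field and let Ω and Ψ be nonscalar similarity classes of M(2,K). Assume that Ω is not irreducible (the characteristic polynomial of elements of Ω is reducible over K). Then tr(ΩΨ) = K if and only if Ω is not primary (the minimal polynomial of elements of Ω is not a power of a single irreducible polynomial over K) or Ψ is not irreducible (the characteristic polynomial of elements of Ψ is reducible over K). -/

import Mathlib

open Matrix Polynomial

section Aux

variable {K : Type*} [Field K]

/-- The characteristic polynomial of a `2 × 2` matrix. -/
lemma aux_charpoly_fin2 (A : Matrix (Fin 2) (Fin 2) K) :
    A.charpoly = X ^ 2 - C A.trace * X + C A.det := by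
  rw [Matrix.charpoly, Matrix.det_fin_two]
  simp [charmatrix_apply_eq, charmatrix_apply_ne, Matrix.trace_fin_two, Matrix.det_fin_two]
  ring

lemma aux_charpoly_coeff0 (A : Matrix (Fin 2) (Fin 2) K) :
    A.charpoly.coeff 0 = A.det := by
  rw [aux_charpoly_fin2]
  simp

lemma aux_charpoly_coeff1 (A : Matrix (Fin 2) (Fin 2) K) :
    A.charpoly.coeff 1 = -A.trace := by
  rw [aux_charpoly_fin2]
  simp [coeff_X_pow]

lemma aux_charpoly_natDegree (A : Matrix (Fin 2) (Fin 2) K) :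
    A.charpoly.natDegree = 2 := by
  simp [A.charpoly_natDegree_eq_dim]

/-- Cayley–Hamilton for `2 × 2` matrices, explicitly. -/
lemma aux_ch2 (A : Matrix (Fin 2) (Fin 2) K) : A * A = A.trace • A - A.det • 1 := by
  ext i j
  fin_cases i <;> fin_cases j <;>
    simp [Matrix.mul_apply, Fin.sum_univ_two, Matrix.trace_fin_two, Matrix.det_fin_two,
      Matrix.one_apply] <;> ring

/-- Reducibility of the characteristic polynomial of a `2 × 2` matrix in terms of
trace and determinant. -/
lemma aux_not_irr_iff (A : Matrix (Fin 2) (Fin 2) K) :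
    ¬ Irreducible A.charpoly ↔ ∃ a b : K, A.trace = a + b ∧ A.det = a * b := by
  rw [A.charpoly_monic.not_irreducible_iff_exists_add_mul_eq_coeff (aux_charpoly_natDegree A)]
  constructor
  · rintro ⟨c₁, c₂, h0, h1⟩
    rw [aux_charpoly_coeff0] at h0
    rw [aux_charpoly_coeff1] at h1
    exact ⟨-c₁, -c₂, by linear_combination -h1, by linear_combination h0⟩
  · rintro ⟨a, b, ht, hd⟩
    refine ⟨-a, -b, ?_, ?_⟩
    · rw [aux_charpoly_coeff0]
      linear_combination hd
    · rw [aux_charpoly_coeff1]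
      linear_combination -ht

/-- Any nonscalar `2 × 2` matrix is conjugate to the companion matrix of its
characteristic polynomial. -/
lemma aux_conj_companion (A : Matrix (Fin 2) (Fin 2) K) (hA : ∀ c : K, A ≠ c • 1) :
    ∃ g : (Matrix (Fin 2) (Fin 2) K)ˣ,
      (g : Matrix (Fin 2) (Fin 2) K) * !![0, -A.det; 1, A.trace] *
        (↑g⁻¹ : Matrix (Fin 2) (Fin 2) K) = A := by
  set C : Matrix (Fin 2) (Fin 2) K := !![0, -A.det; 1, A.trace] with hC
  have key : ∀ P : Matrix (Fin 2) (Fin 2) K, IsUnit P → A * P = P * C →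
      ∃ g : (Matrix (Fin 2) (Fin 2) K)ˣ,
        (g : Matrix (Fin 2) (Fin 2) K) * C * (↑g⁻¹ : Matrix (Fin 2) (Fin 2) K) = A := by
    rintro P ⟨g, rfl⟩ hPC
    refine ⟨g, ?_⟩
    calc (g : Matrix (Fin 2) (Fin 2) K) * C * ↑g⁻¹
        = A * ↑g * ↑g⁻¹ := by rw [hPC]
      _ = A := by rw [mul_assoc, g.mul_inv, mul_one]
  by_cases h10 : A 1 0 ≠ 0
  · refine key !![1, A 0 0; 0, A 1 0] ?_ ?_
    · rw [Matrix.isUnit_iff_isUnit_det, Matrix.det_fin_two_of]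
      simpa using h10
    · ext i j
      fin_cases i <;> fin_cases j <;>
        simp [hC, Matrix.mul_apply, Fin.sum_univ_two, Matrix.trace_fin_two,
          Matrix.det_fin_two] <;> ring
  · push_neg at h10
    by_cases h01 : A 0 1 ≠ 0
    · refine key !![0, A 0 1; 1, A 1 1] ?_ ?_
      · rw [Matrix.isUnit_iff_isUnit_det, Matrix.det_fin_two_of]
        simpa using h01
      · ext i j
        fin_cases i <;> fin_cases j <;>
          simp [hC, Matrix.mul_apply, Fin.sum_univ_two, Matrix.trace_fin_two,
            Matrix.det_fin_two, h10] <;> ring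
    · push_neg at h01
      have hdd : A 0 0 ≠ A 1 1 := by
        intro h
        apply hA (A 0 0)
        ext i j
        fin_cases i <;> fin_cases j <;>
          simp [Matrix.smul_apply, Matrix.one_apply, h01, h10, h]
      refine key !![1, A 0 0; 1, A 1 1] ?_ ?_
      · rw [Matrix.isUnit_iff_isUnit_det, Matrix.det_fin_two_of]
        simpa using sub_ne_zero_of_ne hdd.symm
      · ext i j
        fin_cases i <;> fin_cases j <;>
          simp [hC, Matrix.mul_apply, Fin.sum_univ_two, Matrix.trace_fin_two,
            Matrix.det_fin_two, h10, h01] <;> ring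

/-- Two nonscalar `2 × 2` matrices with the same trace and determinant are conjugate. -/
lemma aux_mem_class (A B : Matrix (Fin 2) (Fin 2) K)
    (hA : ∀ c : K, A ≠ c • 1) (hB : ∀ c : K, B ≠ c • 1)
    (ht : B.trace = A.trace) (hd : B.det = A.det) :
    ∃ g : (Matrix (Fin 2) (Fin 2) K)ˣ,
      (g : Matrix (Fin 2) (Fin 2) K) * A * (↑g⁻¹ : Matrix (Fin 2) (Fin 2) K) = B := by
  obtain ⟨g₁, hg₁⟩ := aux_conj_companion A hA
  obtain ⟨g₂, hg₂⟩ := aux_conj_companion B hB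
  rw [ht, hd] at hg₂
  refine ⟨g₂ * g₁⁻¹, ?_⟩
  rw [← hg₂]
  conv_lhs => rw [← hg₁]
  simp only [_root_.mul_inv_rev, inv_inv, Units.val_mul]
  simp only [mul_assoc, Units.inv_mul_cancel_left, Units.mul_inv_cancel_left]

lemma aux_conj_trace (A : Matrix (Fin 2) (Fin 2) K) (g : (Matrix (Fin 2) (Fin 2) K)ˣ) :
    ((g : Matrix (Fin 2) (Fin 2) K) * A * (↑g⁻¹ : Matrix (Fin 2) (Fin 2) K)).trace
      = A.trace := by
  rw [Matrix.trace_mul_comm, ← mul_assoc, Units.inv_mul, one_mul]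

lemma aux_conj_det (A : Matrix (Fin 2) (Fin 2) K) (g : (Matrix (Fin 2) (Fin 2) K)ˣ) :
    ((g : Matrix (Fin 2) (Fin 2) K) * A * (↑g⁻¹ : Matrix (Fin 2) (Fin 2) K)).det
      = A.det := by
  have h1 : ((g : Matrix (Fin 2) (Fin 2) K)).det * ((↑g⁻¹ : Matrix (Fin 2) (Fin 2) K)).det
      = 1 := by
    rw [← Matrix.det_mul, Units.mul_inv, Matrix.det_one]
  calc ((g : Matrix (Fin 2) (Fin 2) K) * A * (↑g⁻¹ : Matrix (Fin 2) (Fin 2) K)).det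
      = (g : Matrix (Fin 2) (Fin 2) K).det * A.det
          * ((↑g⁻¹ : Matrix (Fin 2) (Fin 2) K)).det := by
        rw [Matrix.det_mul, Matrix.det_mul]
    _ = A.det * ((g : Matrix (Fin 2) (Fin 2) K).det
          * ((↑g⁻¹ : Matrix (Fin 2) (Fin 2) K)).det) := by ring
    _ = A.det := by rw [h1, mul_one]

/-- The minimal polynomial of a nonscalar `2 × 2` matrix is its characteristic
polynomial. -/
lemma aux_minpoly_eq_charpoly (A : Matrix (Fin 2) (Fin 2) K) (hA : ∀ c : K, A ≠ c • 1) :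
    minpoly K A = A.charpoly := by
  have hint : IsIntegral K A := ⟨A.charpoly, A.charpoly_monic, by
    rw [← Polynomial.aeval_def]; exact A.aeval_self_charpoly⟩
  have hdvd := A.minpoly_dvd_charpoly
  have hcd := aux_charpoly_natDegree A
  have hm := minpoly.monic hint
  have hle : (minpoly K A).natDegree ≤ 2 := by
    have := Polynomial.natDegree_le_of_dvd hdvd A.charpoly_monic.ne_zero
    omega
  have hpos := minpoly.natDegree_pos hint
  have hne1 : (minpoly K A).natDegree ≠ 1 := by
    intro h1
    have heq := hm.eq_X_add_C h1
    have h0 := minpoly.aeval K A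
    rw [heq] at h0
    simp only [map_add, aeval_X, aeval_C] at h0
    apply hA (-(minpoly K A).coeff 0)
    have halg : algebraMap K (Matrix (Fin 2) (Fin 2) K) ((minpoly K A).coeff 0)
        = ((minpoly K A).coeff 0) • 1 := Algebra.algebraMap_eq_smul_one _
    rw [halg] at h0
    rw [neg_smul]
    linear_combination (norm := abel) h0
  obtain ⟨q, hq⟩ := hdvd
  have hq0 : q ≠ 0 := by
    rintro rfl
    simp [A.charpoly_monic.ne_zero] at hq
  have hqd : q.natDegree = 0 := by
    have h2 := hcd
    rw [hq, Polynomial.natDegree_mul hm.ne_zero hq0] at h2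
    omega
  have hl : q.leadingCoeff = 1 := by
    have hmono := A.charpoly_monic
    rw [hq] at hmono
    have : (minpoly K A * q).leadingCoeff = 1 := hmono
    rwa [Polynomial.leadingCoeff_mul, hm.leadingCoeff, one_mul] at this
  have hq1 : q = 1 := by
    rw [Polynomial.leadingCoeff, hqd] at hl
    rw [Polynomial.eq_C_of_natDegree_eq_zero hqd, hl, Polynomial.C_1]
  rw [hq, hq1, mul_one]

/-- If a `2 × 2` matrix admits an eigenvalue, its characteristic polynomial is
reducible. -/
lemma aux_not_irr_of_root (A : Matrix (Fin 2) (Fin 2) K) (lam : K)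
    (h : lam * lam - A.trace * lam + A.det = 0) : ¬ Irreducible A.charpoly := by
  rw [aux_not_irr_iff]
  exact ⟨lam, A.trace - lam, by ring, by linear_combination h⟩

/-- A quadratic eigenvalue equation from an eigenvector. -/
lemma aux_quad (w x y z v0 v1 lam : K) (hv : v0 ≠ 0 ∨ v1 ≠ 0)
    (e1 : w * v0 + x * v1 = lam * v0) (e2 : y * v0 + z * v1 = lam * v1) :
    lam * lam - (w + z) * lam + (w * z - x * y) = 0 := by
  rcases hv with h | h
  · have key : (lam * lam - (w + z) * lam + (w * z - x * y)) * v0 = 0 := by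
      linear_combination (z - lam) * e1 - x * e2
    exact (mul_eq_zero.mp key).resolve_right h
  · have key : (lam * lam - (w + z) * lam + (w * z - x * y)) * v1 = 0 := by
      linear_combination (w - lam) * e2 - y * e1
    exact (mul_eq_zero.mp key).resolve_right h

/-- If `v ≠ 0` and `ψ v` is proportional to `v`, then `charpoly ψ` is reducible. -/
lemma aux_eigen_root (ψ : Matrix (Fin 2) (Fin 2) K) (v0 v1 : K) (hv : v0 ≠ 0 ∨ v1 ≠ 0)
    (hdep : v0 * (ψ 1 0 * v0 + ψ 1 1 * v1) = v1 * (ψ 0 0 * v0 + ψ 0 1 * v1)) :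
    ¬ Irreducible ψ.charpoly := by
  have htr : ψ.trace = ψ 0 0 + ψ 1 1 := Matrix.trace_fin_two ψ
  have hdet : ψ.det = ψ 0 0 * ψ 1 1 - ψ 0 1 * ψ 1 0 := Matrix.det_fin_two ψ
  rcases hv with h | h
  · refine aux_not_irr_of_root ψ ((ψ 0 0 * v0 + ψ 0 1 * v1) / v0) ?_
    rw [htr, hdet]
    apply aux_quad (ψ 0 0) (ψ 0 1) (ψ 1 0) (ψ 1 1) v0 v1 _ (Or.inl h)
    · exact (div_mul_cancel₀ _ h).symm
    · rw [div_mul_eq_mul_div, eq_div_iff h]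
      linear_combination hdep
  · refine aux_not_irr_of_root ψ ((ψ 1 0 * v0 + ψ 1 1 * v1) / v1) ?_
    rw [htr, hdet]
    apply aux_quad (ψ 0 0) (ψ 0 1) (ψ 1 0) (ψ 1 1) v0 v1 _ (Or.inr h)
    · rw [div_mul_eq_mul_div, eq_div_iff h]
      linear_combination -hdep
    · exact (div_mul_cancel₀ _ h).symm

end Aux

lemma aux_conj_mul {K : Type*} [Field K] (g : (Matrix (Fin 2) (Fin 2) K)ˣ)
    (X Y : Matrix (Fin 2) (Fin 2) K) :
    ((g : Matrix (Fin 2) (Fin 2) K) * X * (↑g⁻¹ : Matrix (Fin 2) (Fin 2) K))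
      * ((g : Matrix (Fin 2) (Fin 2) K) * Y * (↑g⁻¹ : Matrix (Fin 2) (Fin 2) K))
      = (g : Matrix (Fin 2) (Fin 2) K) * (X * Y) * (↑g⁻¹ : Matrix (Fin 2) (Fin 2) K) := by
  simp only [mul_assoc, Units.inv_mul_cancel_left]

/-- **Lemma 1(2).** Let `K` be a field and `Ω`, `Ψ` nonscalar similarity classes of
`M(2,K)` with `Ω` not irreducible.  Then the set of traces of `ΩΨ` equals `K` if and
only if `Ω` is not primary (the minimal polynomial of its elements is not a power of a
single monic irreducible polynomial) or `Ψ` is not irreducible (the characteristic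
polynomial of its elements is reducible over `K`). -/
theorem trace_product_eq_univ_iff_not_primary_or_not_irreducible
    {K : Type*} [Field K]
    (Ω Ψ : Set (Matrix (Fin 2) (Fin 2) K))
    (hΩclass : ∃ A : Matrix (Fin 2) (Fin 2) K,
      Ω = {B | ∃ g : (Matrix (Fin 2) (Fin 2) K)ˣ,
        (g : Matrix (Fin 2) (Fin 2) K) * A * (↑g⁻¹ : Matrix (Fin 2) (Fin 2) K) = B})
    (hΨclass : ∃ A : Matrix (Fin 2) (Fin 2) K,
      Ψ = {B | ∃ g : (Matrix (Fin 2) (Fin 2) K)ˣ,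
        (g : Matrix (Fin 2) (Fin 2) K) * A * (↑g⁻¹ : Matrix (Fin 2) (Fin 2) K) = B})
    (hΩns : ∀ ω ∈ Ω, ∀ c : K, ω ≠ c • (1 : Matrix (Fin 2) (Fin 2) K))
    (hΨns : ∀ ψ ∈ Ψ, ∀ c : K, ψ ≠ c • (1 : Matrix (Fin 2) (Fin 2) K))
    (hΩred : ∀ ω ∈ Ω, ¬ Irreducible (Matrix.charpoly ω)) :
    {τ : K | ∃ ω ∈ Ω, ∃ ψ ∈ Ψ, (ω * ψ).trace = τ} = Set.univ ↔
      (¬ (∃ p : Polynomial K, p.Monic ∧ Irreducible p ∧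
            ∃ k : ℕ, ∀ ω ∈ Ω, minpoly K ω = p ^ k) ∨
        ∀ ψ ∈ Ψ, ¬ Irreducible (Matrix.charpoly ψ)) := by
  obtain ⟨A, hA⟩ := hΩclass
  obtain ⟨B, hB⟩ := hΨclass
  have hAmem : A ∈ Ω := by
    rw [hA]; exact ⟨1, by simp⟩
  have hBmem : B ∈ Ψ := by
    rw [hB]; exact ⟨1, by simp⟩
  have hAns : ∀ c : K, A ≠ c • 1 := hΩns A hAmem
  have hBns : ∀ c : K, B ≠ c • 1 := hΨns B hBmem
  obtain ⟨a, b, ht, hd⟩ := (aux_not_irr_iff A).mp (hΩred A hAmem)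
  -- membership criteria
  have hmemΩ : ∀ ω : Matrix (Fin 2) (Fin 2) K, (∀ c : K, ω ≠ c • 1) →
      ω.trace = A.trace → ω.det = A.det → ω ∈ Ω := by
    intro ω hns htr hdet
    rw [hA]
    exact aux_mem_class A ω hAns hns htr hdet
  have hmemΨ : ∀ ψ : Matrix (Fin 2) (Fin 2) K, (∀ c : K, ψ ≠ c • 1) →
      ψ.trace = B.trace → ψ.det = B.det → ψ ∈ Ψ := by
    intro ψ hns htr hdet
    rw [hB]
    exact aux_mem_class B ψ hBns hns htr hdet
  -- trace and det are class invariants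
  have hinvΩ : ∀ ω ∈ Ω, ω.trace = A.trace ∧ ω.det = A.det := by
    intro ω hω
    rw [hA] at hω
    obtain ⟨g, rfl⟩ := hω
    exact ⟨aux_conj_trace A g, aux_conj_det A g⟩
  have hinvΨ : ∀ ψ ∈ Ψ, ψ.trace = B.trace ∧ ψ.det = B.det := by
    intro ψ hψ
    rw [hB] at hψ
    obtain ⟨g, rfl⟩ := hψ
    exact ⟨aux_conj_trace B g, aux_conj_det B g⟩
  -- Construction 1: if a ≠ b then the trace set is everything.
  have construction1 : a ≠ b →
      {τ : K | ∃ ω ∈ Ω, ∃ ψ ∈ Ψ, (ω * ψ).trace = τ} = Set.univ := by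
    intro hab
    ext τ
    simp only [Set.mem_setOf_eq, Set.mem_univ, iff_true]
    set x : K := (τ - b * B.trace) / (a - b) with hx
    refine ⟨!![a, 0; 0, b], ?_, !![x, 1; x * (B.trace - x) - B.det, B.trace - x], ?_, ?_⟩
    · refine hmemΩ _ ?_ ?_ ?_
      · intro c h
        apply hab
        have h00 := congrFun (congrFun h 0) 0
        have h11 := congrFun (congrFun h 1) 1
        simp [Matrix.smul_apply, Matrix.one_apply] at h00 h11
        rw [h00, h11]
      · rw [Matrix.trace_fin_two, ht]; simp
      · rw [Matrix.det_fin_two, hd]; simp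
    · refine hmemΨ _ ?_ ?_ ?_
      · intro c h
        have h01 := congrFun (congrFun h 0) 1
        simp [Matrix.smul_apply, Matrix.one_apply] at h01
      · rw [Matrix.trace_fin_two]; simp
      · rw [Matrix.det_fin_two]; simp; try ring
    · rw [Matrix.trace_fin_two]
      simp [Matrix.mul_apply, Fin.sum_univ_two]
      have hab' : a - b ≠ 0 := sub_ne_zero_of_ne hab
      rw [hx]
      field_simp
      ring
  -- Construction 2: if Ψ is reducible then the trace set is everything.
  have construction2 : (¬ Irreducible B.charpoly) →
      {τ : K | ∃ ω ∈ Ω, ∃ ψ ∈ Ψ, (ω * ψ).trace = τ} = Set.univ := by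
    intro hBred
    obtain ⟨c, e, htB, hdB⟩ := (aux_not_irr_iff B).mp hBred
    ext τ
    simp only [Set.mem_setOf_eq, Set.mem_univ, iff_true]
    set y : K := τ - a * c - b * e with hy
    have hωmem : !![a, 1; 0, b] ∈ Ω := by
      refine hmemΩ _ ?_ ?_ ?_
      · intro cc h
        have h01 := congrFun (congrFun h 0) 1
        simp [Matrix.smul_apply, Matrix.one_apply] at h01
      · rw [Matrix.trace_fin_two, ht]; simp
      · rw [Matrix.det_fin_two, hd]; simp
    by_cases hy0 : y = 0
    · refine ⟨!![a, 1; 0, b], hωmem, !![c, 1; 0, e], ?_, ?_⟩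
      · refine hmemΨ _ ?_ ?_ ?_
        · intro cc h
          have h01 := congrFun (congrFun h 0) 1
          simp [Matrix.smul_apply, Matrix.one_apply] at h01
        · rw [Matrix.trace_fin_two, htB]; simp
        · rw [Matrix.det_fin_two, hdB]; simp
      · rw [Matrix.trace_fin_two]
        simp [Matrix.mul_apply, Fin.sum_univ_two]
        have hyy : τ - a * c - b * e = 0 := hy0
        linear_combination -hyy
    · refine ⟨!![a, 1; 0, b], hωmem, !![c, 0; y, e], ?_, ?_⟩
      · refine hmemΨ _ ?_ ?_ ?_
        · intro cc h
          have h10 := congrFun (congrFun h 1) 0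
          simp [Matrix.smul_apply, Matrix.one_apply] at h10
          exact hy0 h10
        · rw [Matrix.trace_fin_two, htB]; simp
        · rw [Matrix.det_fin_two, hdB]; simp
      · rw [Matrix.trace_fin_two]
        simp [Matrix.mul_apply, Fin.sum_univ_two]
        rw [hy]
        ring
  -- If a = b then Ω is primary.
  have primary_of_eq : a = b →
      (∃ p : Polynomial K, p.Monic ∧ Irreducible p ∧
        ∃ k : ℕ, ∀ ω ∈ Ω, minpoly K ω = p ^ k) := by
    rintro rfl
    refine ⟨X - C a, monic_X_sub_C a, irreducible_X_sub_C a, 2, ?_⟩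
    intro ω hω
    obtain ⟨htr, hdet⟩ := hinvΩ ω hω
    rw [aux_minpoly_eq_charpoly ω (hΩns ω hω), aux_charpoly_fin2, htr, hdet, ht, hd,
      C_add, C_mul]
    ring
  -- If Ω is primary then a = b.
  have eq_of_primary : (∃ p : Polynomial K, p.Monic ∧ Irreducible p ∧
      ∃ k : ℕ, ∀ ω ∈ Ω, minpoly K ω = p ^ k) → a = b := by
    rintro ⟨p, hpm, hpi, k, hk⟩
    have hmA := hk A hAmem
    rw [aux_minpoly_eq_charpoly A hAns] at hmA
    have hdeg2 : k * p.natDegree = 2 := by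
      have := aux_charpoly_natDegree A
      rw [hmA, Polynomial.natDegree_pow] at this
      exact this
    have hp1 := hpi.natDegree_pos
    have hpdvd : p.natDegree ∣ 2 := ⟨k, by rw [← hdeg2, mul_comm]⟩
    have hple : p.natDegree ≤ 2 := Nat.le_of_dvd (by norm_num) hpdvd
    interval_cases hpd : p.natDegree
    · -- degree 1, k = 2
      have hk2 : k = 2 := by omega
      subst hk2
      have hpc := hpm.eq_X_add_C hpd
      set cc : K := p.coeff 0 with hcc
      rw [hpc] at hmA
      have h1 : A.charpoly.coeff 1 = ((X + C cc) ^ 2).coeff 1 := by rw [hmA]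
      have h0 : A.charpoly.coeff 0 = ((X + C cc) ^ 2).coeff 0 := by rw [hmA]
      have hexp : ((X + C cc) ^ 2 : Polynomial K)
          = X ^ 2 + C (cc + cc) * X + C (cc * cc) := by
        rw [C_add, C_mul]; ring
      rw [aux_charpoly_coeff1, hexp] at h1
      rw [aux_charpoly_coeff0, hexp] at h0
      simp [coeff_X_pow] at h1 h0
      rw [ht] at h1
      rw [hd] at h0
      have : (a - b) * (a - b) = 0 := by linear_combination ((cc + cc) - (a + b)) * h1 - 4 * h0
      have h5 := mul_self_eq_zero.mp this
      linear_combination h5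
    · -- degree 2, k = 1
      have hk1 : k = 1 := by omega
      subst hk1
      rw [pow_one] at hmA
      exact absurd (hmA ▸ hpi) (hΩred A hAmem)
  constructor
  · -- LHS → RHS
    intro hset
    by_contra hcon
    push_neg at hcon
    obtain ⟨hprim, ψ₀, hψ₀mem, hψ₀irr⟩ := hcon
    have hab : a = b := eq_of_primary hprim
    subst hab
    -- B has irreducible charpoly
    have hBirr : Irreducible B.charpoly := by
      obtain ⟨htr, hdet⟩ := hinvΨ ψ₀ hψ₀mem
      rwa [aux_charpoly_fin2, htr, hdet, ← aux_charpoly_fin2] at hψ₀irr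
    -- the value a * B.trace is not attained
    have hval : (a * B.trace) ∈ {τ : K | ∃ ω ∈ Ω, ∃ ψ ∈ Ψ, (ω * ψ).trace = τ} := by
      rw [hset]; trivial
    obtain ⟨ω, hω, ψ, hψ, htrval⟩ := hval
    -- decompose ω = a • 1 + M with M ≠ 0, M * M = 0
    have hN2 : (A - a • 1) * (A - a • 1) = 0 := by
      have hch := aux_ch2 A
      rw [ht, hd] at hch
      have h1 : a • (1 : Matrix (Fin 2) (Fin 2) K) * A = a • A := by
        rw [smul_mul_assoc, one_mul]
      have h2 : A * (a • (1 : Matrix (Fin 2) (Fin 2) K)) = a • A := by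
        rw [mul_smul_comm, mul_one]
      have h3 : (a • (1 : Matrix (Fin 2) (Fin 2) K)) * (a • (1 : Matrix (Fin 2) (Fin 2) K))
          = (a * a) • (1 : Matrix (Fin 2) (Fin 2) K) := by
        rw [smul_mul_assoc, mul_smul_comm, one_mul, smul_smul]
      have : (A - a • 1) * (A - a • 1)
          = A * A - (a + a) • A + (a * a) • (1 : Matrix (Fin 2) (Fin 2) K) := by
        rw [sub_mul, mul_sub, mul_sub, h1, h2, h3, add_smul]
        abel
      rw [this, hch]
      abel
    have hN0 : A - a • 1 ≠ 0 := by
      intro h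
      exact hAns a (by rw [← sub_eq_zero]; exact h)
    rw [hA] at hω
    obtain ⟨g, rfl⟩ := hω
    set M : Matrix (Fin 2) (Fin 2) K :=
      (g : Matrix (Fin 2) (Fin 2) K) * (A - a • 1) * (↑g⁻¹ : Matrix (Fin 2) (Fin 2) K)
      with hM
    have hωM : (g : Matrix (Fin 2) (Fin 2) K) * A * (↑g⁻¹ : Matrix (Fin 2) (Fin 2) K)
        = a • 1 + M := by
      rw [hM, Matrix.mul_sub, Matrix.sub_mul]
      have : (g : Matrix (Fin 2) (Fin 2) K) * (a • 1) * (↑g⁻¹ : Matrix (Fin 2) (Fin 2) K)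
          = a • 1 := by
        rw [mul_smul_comm, mul_one, smul_mul_assoc, Units.mul_inv]
      rw [this]
      abel
    have hM2 : M * M = 0 := by
      have hcm := aux_conj_mul g (A - a • 1) (A - a • 1)
      rw [hN2, mul_zero, zero_mul] at hcm
      rw [hM]
      exact hcm
    have hMne : M ≠ 0 := by
      intro h
      apply hN0
      have : (↑g⁻¹ : Matrix (Fin 2) (Fin 2) K) * M * (g : Matrix (Fin 2) (Fin 2) K)
          = A - a • 1 := by
        rw [hM, mul_assoc, mul_assoc, Units.inv_mul, mul_one, ← mul_assoc,
          Units.inv_mul, one_mul]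
      rw [← this, h, mul_zero, zero_mul]
    -- trace M = 0 and det M = 0
    have htrM : M.trace = 0 := by
      by_contra htM
      have hch := aux_ch2 M
      rw [hM2] at hch
      have hscal : M = (M.det / M.trace) • 1 := by
        have h2 : M.trace • M = M.det • (1 : Matrix (Fin 2) (Fin 2) K) := by
          rw [← sub_eq_zero, ← hch]
        have := congrArg (fun N => (M.trace)⁻¹ • N) h2
        simpa [smul_smul, inv_mul_cancel₀ htM, div_eq_inv_mul] using this
      apply hMne
      have hsq : M * M = ((M.det / M.trace) * (M.det / M.trace)) • 1 := by
        conv_lhs => rw [hscal]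
        rw [smul_mul_assoc, mul_smul_comm, smul_smul, mul_one]
      rw [hM2] at hsq
      have hc0 : (M.det / M.trace) * (M.det / M.trace) = 0 := by
        have := congrFun (congrFun hsq.symm 0) 0
        simpa [Matrix.smul_apply, Matrix.one_apply] using this
      have := mul_self_eq_zero.mp hc0
      rw [hscal, this, zero_smul]
    have hdetM : M.det = 0 := by
      have hch := aux_ch2 M
      rw [hM2, htrM, zero_smul, zero_sub, eq_comm, neg_eq_zero] at hch
      have := congrFun (congrFun hch 0) 0
      simpa [Matrix.smul_apply, Matrix.one_apply] using this
    -- expand the trace condition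
    have hψtr : ψ.trace = B.trace := (hinvΨ ψ hψ).1
    have htrMψ : (M * ψ).trace = 0 := by
      have hexp : ((a • 1 + M) * ψ).trace = a * ψ.trace + (M * ψ).trace := by
        rw [add_mul, Matrix.trace_add, smul_mul_assoc, one_mul, Matrix.trace_smul,
          smul_eq_mul]
      rw [hωM] at htrval
      rw [hexp, hψtr] at htrval
      linear_combination htrval
    -- entries of M
    have hq : M 1 1 = -M 0 0 := by
      have h6 := Matrix.trace_fin_two M
      rw [htrM] at h6
      linear_combination -h6
    have hm2 : M 0 0 * M 0 0 + M 0 1 * M 1 0 = 0 := by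
      have h7 := Matrix.det_fin_two M
      rw [hdetM, hq] at h7
      linear_combination h7
    have h0 : M 0 0 * ψ 0 0 + M 0 1 * ψ 1 0 + M 1 0 * ψ 0 1 - M 0 0 * ψ 1 1 = 0 := by
      have hexp : (M * ψ).trace
          = M 0 0 * ψ 0 0 + M 0 1 * ψ 1 0 + M 1 0 * ψ 0 1 + M 1 1 * ψ 1 1 := by
        rw [Matrix.trace_fin_two]
        simp [Matrix.mul_apply, Fin.sum_univ_two]
        ring
      rw [htrMψ, hq] at hexp
      linear_combination -hexp
    -- produce an eigenvector, contradicting irreducibility of charpoly ψ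
    have hψirr : Irreducible ψ.charpoly := by
      obtain ⟨htr2, hdet2⟩ := hinvΨ ψ hψ
      rwa [aux_charpoly_fin2, htr2, hdet2, ← aux_charpoly_fin2]
    by_cases hn : M 0 1 ≠ 0
    · refine absurd hψirr (aux_eigen_root ψ (M 0 1) (-(M 0 0)) (Or.inl hn) ?_)
      linear_combination M 0 1 * h0 - ψ 0 1 * hm2
    · push_neg at hn
      by_cases hp : M 1 0 ≠ 0
      · refine absurd hψirr (aux_eigen_root ψ (M 0 0) (M 1 0) (Or.inr hp) ?_)
        linear_combination ψ 1 0 * hm2 - M 1 0 * h0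
      · push_neg at hp
        apply hMne
        have hm0 : M 0 0 = 0 := by
          have := hm2
          rw [hn, hp] at this
          simpa [mul_self_eq_zero] using this
        ext i j
        fin_cases i <;> fin_cases j <;> simp [hm0, hn, hp, hq]
  · -- RHS → LHS
    rintro (hnp | hψred)
    · refine construction1 ?_
      intro hab
      exact hnp (primary_of_eq hab)
    · exact construction2 (hψred B hBmem)
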